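/- The Gaussian Ψ₀(x,t) = (πħ)^{−1/4}(Ω/μ)^{1/4} exp(−((iρ+Ω)/(2ħμ))x²)·exp(−(i/2)Ωt − (iμκc/(4Ω))t) has unit L² norm in x for every t and solves the 1D RGPE. -/

import Mathlib

open MeasureTheory

noncomputable section

/-- `Ψ(·,t)` is in the Schwartz space for each `t`. -/
def SchwartzSlice (Ψ : ℝ → ℝ → ℂ) : Prop :=
  ∀ t : ℝ, ∃ f : SchwartzMap ℝ ℂ, ∀ x : ℝ, f x = Ψ x t

/-- The 1D reduced Gross–Pitaevskii equation. -/
def SolvesRGPE (hbar μ ρ σ κ a b c : ℝ) (Ψ : ℝ → ℝ → ℂ) : Prop :=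
  ∀ x t : ℝ,
    (-Complex.I * (hbar : ℂ)) * deriv (fun τ => Ψ x τ) t
      - ((μ * hbar ^ 2 / 2 : ℝ) : ℂ) * deriv (fun y => deriv (fun z => Ψ z t) y) x
      - Complex.I * (hbar : ℂ) * (ρ : ℂ) *
          ((x : ℂ) * deriv (fun y => Ψ y t) x + Ψ x t / 2)
      + ((σ / 2 * x ^ 2 : ℝ) : ℂ) * Ψ x t
      + ((κ / 2 * (a * x ^ 2 * (∫ y : ℝ, ‖Ψ y t‖ ^ 2)
            + 2 * b * x * (∫ y : ℝ, y * ‖Ψ y t‖ ^ 2)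
            + c * (∫ y : ℝ, y ^ 2 * ‖Ψ y t‖ ^ 2)) : ℝ) : ℂ) * Ψ x t = 0

/-- The Gaussian
`Ψ₀(x,t) = (πħ)^{−1/4}(Ω/μ)^{1/4} exp(−((iρ+Ω)/(2ħμ))x²)·exp(−(i/2)Ωt − (iμκc/(4Ω))t)`. -/
def Psi0sol (hbar μ ρ κ c Ω : ℝ) (x t : ℝ) : ℂ :=
  (((Real.pi * hbar) ^ (-(1 / 4 : ℝ)) * (Ω / μ) ^ ((1 / 4 : ℝ)) : ℝ) : ℂ) *
    Complex.exp (-((Complex.I * (ρ : ℂ) + (Ω : ℂ)) / ((2 * hbar * μ : ℝ) : ℂ)) *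
      (x : ℂ) ^ 2) *
    Complex.exp (-(Complex.I / 2) * (Ω : ℂ) * (t : ℂ)
      - Complex.I * ((μ * κ * c / (4 * Ω) : ℝ) : ℂ) * (t : ℂ))

namespace GaussRGPE
open Real Filter Topology


lemma gauss_m1 {b : ℝ} (hb : 0 < b) :
    ∫ x : ℝ, x * Real.exp (-b * x ^ 2) = 0 := by
  have h := MeasureTheory.integral_neg_eq_self (fun x : ℝ => x * Real.exp (-b * x ^ 2))
    (volume : Measure ℝ)
  simp only [neg_sq, neg_mul] at h
  rw [integral_neg] at h
  simp only [neg_mul]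
  linarith

lemma gauss_m2 {b : ℝ} (hb : 0 < b) :
    ∫ x : ℝ, x ^ 2 * Real.exp (-b * x ^ 2) = Real.sqrt (π / b) / (2 * b) := by
  have hint2 : Integrable fun x : ℝ => x ^ 2 * Real.exp (-b * x ^ 2) := by
    have h := integrable_rpow_mul_exp_neg_mul_sq hb (s := 2) (by norm_num)
    have : ∀ x : ℝ, x ^ (2 : ℝ) = x ^ (2 : ℕ) := fun x => by
      rw [show (2:ℝ) = ((2:ℕ):ℝ) by norm_num, Real.rpow_natCast]
    simpa [this] using h
  have hint0 : Integrable fun x : ℝ => Real.exp (-b * x ^ 2) := integrable_exp_neg_mul_sq hb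
  have hderiv : ∀ x : ℝ, HasDerivAt (fun y : ℝ => y * Real.exp (-b * y ^ 2))
      (Real.exp (-b * x ^ 2) - 2 * b * (x ^ 2 * Real.exp (-b * x ^ 2))) x := by
    intro x
    have h1 : HasDerivAt (fun y : ℝ => -b * y ^ 2) (-b * (2 * x)) x := by
      simpa using (hasDerivAt_pow 2 x).const_mul (-b)
    have := (hasDerivAt_id x).mul h1.exp
    convert this using 1
    · rfl
    · rfl
    · rfl
    simp only [id_eq]
    ring
  have hf'int : Integrable fun x : ℝ =>
      Real.exp (-b * x ^ 2) - 2 * b * (x ^ 2 * Real.exp (-b * x ^ 2)) :=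
    hint0.sub (hint2.const_mul (2 * b))
  have htend : Tendsto (fun y : ℝ => y * Real.exp (-b * y ^ 2)) (cocompact ℝ) (𝓝 0) := by
    have h := tendsto_rpow_abs_mul_exp_neg_mul_sq_cocompact hb 1
    have hle : ∀ x : ℝ, ‖x * Real.exp (-b * x ^ 2)‖ ≤ |x| ^ (1:ℝ) * Real.exp (-b * x ^ 2) := by
      intro x
      rw [Real.rpow_one, norm_mul, Real.norm_eq_abs, Real.norm_eq_abs,
        abs_of_nonneg (Real.exp_pos _).le]
    exact squeeze_zero_norm hle h
  have hbot : Tendsto (fun y : ℝ => y * Real.exp (-b * y ^ 2)) atBot (𝓝 0) :=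
    htend.mono_left atBot_le_cocompact
  have htop : Tendsto (fun y : ℝ => y * Real.exp (-b * y ^ 2)) atTop (𝓝 0) :=
    htend.mono_left atTop_le_cocompact
  have key := integral_of_hasDerivAt_of_tendsto hderiv hf'int hbot htop
  rw [integral_sub hint0 (hint2.const_mul (2 * b)), integral_const_mul,
    integral_gaussian] at key
  have hb' : (2 : ℝ) * b ≠ 0 := by positivity
  field_simp at key ⊢
  linarith

lemma hasDerivAt_t (C A E : ℂ) (x t : ℝ) :
    HasDerivAt (fun τ : ℝ => C * Complex.exp (A * (x:ℂ)^2 + E * τ))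
      (E * (C * Complex.exp (A * (x:ℂ)^2 + E * t))) t := by
  have h0 : HasDerivAt (fun τ : ℝ => (τ : ℂ)) 1 t := Complex.ofRealCLM.hasDerivAt
  have h1 := (((h0.const_mul E).const_add (A * (x:ℂ)^2)).cexp).const_mul C
  convert h1 using 1
  · rfl
  ring

lemma hasDerivAt_x (C A E : ℂ) (t : ℝ) (x : ℝ) :
    HasDerivAt (fun y : ℝ => C * Complex.exp (A * (y:ℂ)^2 + E * t))
      ((2 * A * x) * (C * Complex.exp (A * (x:ℂ)^2 + E * t))) x := by
  have h0 : HasDerivAt (fun y : ℝ => (y : ℂ)) 1 x := Complex.ofRealCLM.hasDerivAt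
  have hpow : HasDerivAt (fun y : ℝ => ((y:ℂ))^2) (2 * (x:ℂ)) x := by
    simpa [pow_two, two_mul] using h0.fun_mul h0
  have h1 := (((hpow.const_mul A).add_const (E * t)).cexp).const_mul C
  convert h1 using 1
  · rfl
  ring

lemma hasDerivAt_xx (C A E : ℂ) (t : ℝ) (x : ℝ) :
    HasDerivAt (fun y : ℝ => (2 * A * y) * (C * Complex.exp (A * (y:ℂ)^2 + E * t)))
      ((4 * A^2 * x^2 + 2 * A) * (C * Complex.exp (A * (x:ℂ)^2 + E * t))) x := by
  have h0 : HasDerivAt (fun y : ℝ => (y : ℂ)) 1 x := Complex.ofRealCLM.hasDerivAt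
  have hlin : HasDerivAt (fun y : ℝ => 2 * A * (y:ℂ)) (2 * A) x := by
    simpa using h0.const_mul (2 * A)
  have h1 := hlin.mul (hasDerivAt_x C A E t x)
  convert h1 using 1
  · rfl
  · rfl
  ring

lemma psi_eq (hbar μ ρ κ c Ω : ℝ) (x t : ℝ) :
    Psi0sol hbar μ ρ κ c Ω x t =
      (((Real.pi * hbar) ^ (-(1 / 4 : ℝ)) * (Ω / μ) ^ ((1 / 4 : ℝ)) : ℝ) : ℂ) *
        Complex.exp ((-((Complex.I * ρ + Ω) / ((2 * hbar * μ : ℝ) : ℂ))) * (x:ℂ)^2 +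
          (-(Complex.I / 2) * Ω - Complex.I * ((μ * κ * c / (4 * Ω) : ℝ) : ℂ)) * (t:ℂ)) := by
  rw [Psi0sol, mul_assoc, ← Complex.exp_add]
  ring_nf

lemma norm_psi (hbar μ ρ κ c Ω : ℝ) (h_hbar : 0 < hbar) (hμ : 0 < μ) (hΩ : 0 < Ω) (x t : ℝ) :
    ‖Psi0sol hbar μ ρ κ c Ω x t‖ ^ 2 =
      ((Real.pi * hbar) ^ (-(1/2 : ℝ)) * (Ω / μ) ^ ((1/2 : ℝ))) *
        Real.exp (-(Ω / (hbar * μ)) * x ^ 2) := by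
  have hr : (2 * hbar * μ : ℝ) ≠ 0 := by positivity
  have hZre : ((-((Complex.I * ρ + Ω) / ((2 * hbar * μ : ℝ) : ℂ))) * (x:ℂ)^2 +
      (-(Complex.I / 2) * Ω - Complex.I * ((μ * κ * c / (4 * Ω) : ℝ) : ℂ)) * (t:ℂ)).re
      = -(Ω / (2 * hbar * μ)) * x ^ 2 := by
    simp [Complex.add_re, Complex.sub_re, Complex.mul_re, Complex.mul_im, Complex.div_re,
      Complex.div_im, Complex.normSq, Complex.I_re, Complex.I_im, Complex.ofReal_re,
      Complex.ofReal_im, ← Complex.ofReal_pow]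
    field_simp
    left
    trivial
  have hN : (0:ℝ) ≤ (Real.pi * hbar) ^ (-(1 / 4 : ℝ)) * (Ω / μ) ^ ((1 / 4 : ℝ)) := by
    positivity
  rw [psi_eq, norm_mul, Complex.norm_real, Real.norm_eq_abs, abs_of_nonneg hN,
    Complex.norm_exp, hZre]
  have e1 : (((Real.pi*hbar)^(-(1/4:ℝ)))^(2:ℕ) : ℝ) = (Real.pi*hbar)^(-(1/2:ℝ)) := by
    rw [← Real.rpow_natCast ((Real.pi*hbar)^(-(1/4:ℝ))) 2,
      ← Real.rpow_mul (by positivity : (0:ℝ) ≤ Real.pi*hbar)]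
    norm_num
  have e2 : (((Ω/μ)^((1/4:ℝ)))^(2:ℕ) : ℝ) = (Ω/μ)^((1/2:ℝ)) := by
    rw [← Real.rpow_natCast ((Ω/μ)^((1/4:ℝ))) 2,
      ← Real.rpow_mul (by positivity : (0:ℝ) ≤ Ω/μ)]
    norm_num
  have e3 : Real.exp (-(Ω/(2*hbar*μ)) * x^2) ^ (2:ℕ) = Real.exp (-(Ω/(hbar*μ)) * x^2) := by
    rw [sq, ← Real.exp_add]
    congr 1
    field_simp
    ring
  simp only [mul_pow, e1, e2, e3]

end GaussRGPE

set_option maxHeartbeats 1000000 in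
/-- The Gaussian `Ψ₀` has unit `L²` norm and solves the 1D RGPE. -/
theorem gaussian_solves_RGPE
    (hbar μ ρ σ κ a b c Ω : ℝ) (h_hbar : 0 < hbar) (hμ : 0 < μ)
    (hpos : 0 < (σ + κ * a) * μ - ρ ^ 2)
    (hΩ : Ω = Real.sqrt ((σ + κ * a) * μ - ρ ^ 2)) :
    (∀ t : ℝ, (∫ x : ℝ, ‖Psi0sol hbar μ ρ κ c Ω x t‖ ^ 2) = 1) ∧
    SolvesRGPE hbar μ ρ σ κ a b c (Psi0sol hbar μ ρ κ c Ω) := by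
  have hΩpos : 0 < Ω := hΩ ▸ Real.sqrt_pos.mpr hpos
  have hΩsq : Ω ^ 2 = (σ + κ * a) * μ - ρ ^ 2 := by
    rw [hΩ, sq, Real.mul_self_sqrt hpos.le]
  have hb' : 0 < Ω / (hbar * μ) := by positivity
  set N2 : ℝ := (Real.pi * hbar) ^ (-(1/2 : ℝ)) * (Ω / μ) ^ ((1/2 : ℝ)) with hN2
  have hπh : (0:ℝ) < Real.pi * hbar := by positivity
  have hnorm1 : N2 * Real.sqrt (Real.pi / (Ω / (hbar * μ))) = 1 := by
    rw [Real.sqrt_eq_rpow,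
      show Real.pi / (Ω / (hbar * μ)) = Real.pi * hbar * μ / Ω by field_simp]
    rw [hN2, mul_assoc, ← Real.mul_rpow (by positivity) (by positivity),
      show Ω / μ * (Real.pi * hbar * μ / Ω) = Real.pi * hbar by field_simp,
      ← Real.rpow_add hπh]
    norm_num
  have hint : ∀ t : ℝ, (∫ x : ℝ, ‖Psi0sol hbar μ ρ κ c Ω x t‖ ^ 2) = 1 := by
    intro t
    have : (fun x : ℝ => ‖Psi0sol hbar μ ρ κ c Ω x t‖ ^ 2)
        = fun x : ℝ => N2 * Real.exp (-(Ω / (hbar * μ)) * x ^ 2) :=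
      funext fun x => GaussRGPE.norm_psi hbar μ ρ κ c Ω h_hbar hμ hΩpos x t
    rw [this, MeasureTheory.integral_const_mul, integral_gaussian, hnorm1]
  refine ⟨hint, ?_⟩
  intro x t
  have hint1 : (∫ y : ℝ, y * ‖Psi0sol hbar μ ρ κ c Ω y t‖ ^ 2) = 0 := by
    have : (fun y : ℝ => y * ‖Psi0sol hbar μ ρ κ c Ω y t‖ ^ 2)
        = fun y : ℝ => N2 * (y * Real.exp (-(Ω / (hbar * μ)) * y ^ 2)) :=
      funext fun y => by
        rw [GaussRGPE.norm_psi hbar μ ρ κ c Ω h_hbar hμ hΩpos y t]; ring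
    rw [this, MeasureTheory.integral_const_mul, GaussRGPE.gauss_m1 hb', mul_zero]
  have hint2 : (∫ y : ℝ, y ^ 2 * ‖Psi0sol hbar μ ρ κ c Ω y t‖ ^ 2)
      = hbar * μ / (2 * Ω) := by
    have : (fun y : ℝ => y ^ 2 * ‖Psi0sol hbar μ ρ κ c Ω y t‖ ^ 2)
        = fun y : ℝ => N2 * (y ^ 2 * Real.exp (-(Ω / (hbar * μ)) * y ^ 2)) :=
      funext fun y => by
        rw [GaussRGPE.norm_psi hbar μ ρ κ c Ω h_hbar hμ hΩpos y t]; ring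
    rw [this, MeasureTheory.integral_const_mul, GaussRGPE.gauss_m2 hb']
    calc N2 * (Real.sqrt (Real.pi / (Ω / (hbar * μ))) / (2 * (Ω / (hbar * μ))))
        = (N2 * Real.sqrt (Real.pi / (Ω / (hbar * μ)))) / (2 * (Ω / (hbar * μ))) := by ring
      _ = hbar * μ / (2 * Ω) := by rw [hnorm1]; field_simp
  -- derivative computations
  set C : ℂ := (((Real.pi * hbar) ^ (-(1 / 4 : ℝ)) * (Ω / μ) ^ ((1 / 4 : ℝ)) : ℝ) : ℂ) with hC
  set A : ℂ := -((Complex.I * ρ + Ω) / ((2 * hbar * μ : ℝ) : ℂ)) with hA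
  set E : ℂ := -(Complex.I / 2) * Ω - Complex.I * ((μ * κ * c / (4 * Ω) : ℝ) : ℂ) with hE
  have hΨ : ∀ x t : ℝ, Psi0sol hbar μ ρ κ c Ω x t
      = C * Complex.exp (A * (x:ℂ)^2 + E * t) := fun x t =>
    GaussRGPE.psi_eq hbar μ ρ κ c Ω x t
  have hdt : deriv (fun τ => Psi0sol hbar μ ρ κ c Ω x τ) t
      = E * Psi0sol hbar μ ρ κ c Ω x t := by
    rw [show (fun τ => Psi0sol hbar μ ρ κ c Ω x τ)
        = fun τ : ℝ => C * Complex.exp (A * (x:ℂ)^2 + E * τ) from funext fun τ => hΨ x τ,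
      (GaussRGPE.hasDerivAt_t C A E x t).deriv, hΨ x t]
  have hdx : ∀ y : ℝ, deriv (fun z => Psi0sol hbar μ ρ κ c Ω z t) y
      = (2 * A * y) * Psi0sol hbar μ ρ κ c Ω y t := by
    intro y
    rw [show (fun z => Psi0sol hbar μ ρ κ c Ω z t)
        = fun z : ℝ => C * Complex.exp (A * (z:ℂ)^2 + E * t) from funext fun z => hΨ z t,
      (GaussRGPE.hasDerivAt_x C A E t y).deriv, hΨ y t]
  have hdxx : deriv (fun y => deriv (fun z => Psi0sol hbar μ ρ κ c Ω z t) y) x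
      = (4 * A^2 * x^2 + 2 * A) * Psi0sol hbar μ ρ κ c Ω x t := by
    rw [show (fun y => deriv (fun z => Psi0sol hbar μ ρ κ c Ω z t) y)
        = fun y : ℝ => (2 * A * y) * (C * Complex.exp (A * (y:ℂ)^2 + E * t)) from
        funext fun y => by rw [hdx y, hΨ y t],
      (GaussRGPE.hasDerivAt_xx C A E t x).deriv, hΨ x t]
  rw [hdt, hdxx, hdx x, hint t, hint1, hint2]
  have hcoef : (-Complex.I * (hbar:ℂ)) * E
      - ((μ * hbar ^ 2 / 2 : ℝ) : ℂ) * (4 * A ^ 2 * x ^ 2 + 2 * A)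
      - Complex.I * (hbar:ℂ) * (ρ:ℂ) * (2 * A * (x:ℂ) ^ 2 + 1 / 2)
      + ((σ / 2 * x ^ 2 : ℝ) : ℂ)
      + ((κ / 2 * (a * x ^ 2 * 1 + 2 * b * x * 0 + c * (hbar * μ / (2 * Ω))) : ℝ) : ℂ) = 0 := by
    have hσ' : σ = (Ω ^ 2 + ρ ^ 2) / μ - κ * a := by
      field_simp
      linear_combination -hΩsq
    rw [hA, hE, hσ']
    push_cast
    rw [Complex.ext_iff]
    constructor
    · simp only [Complex.add_re, Complex.add_im, Complex.sub_re, Complex.sub_im,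
        Complex.neg_re, Complex.neg_im, Complex.mul_re, Complex.mul_im, Complex.div_re,
        Complex.div_im, Complex.normSq_apply, Complex.I_re, Complex.I_im,
        Complex.ofReal_re, Complex.ofReal_im, Complex.one_re, Complex.one_im,
        Complex.zero_re, Complex.zero_im, Complex.re_ofNat, Complex.im_ofNat, pow_two]
      field_simp
      ring
    · simp only [Complex.add_re, Complex.add_im, Complex.sub_re, Complex.sub_im,
        Complex.neg_re, Complex.neg_im, Complex.mul_re, Complex.mul_im, Complex.div_re,
        Complex.div_im, Complex.normSq_apply, Complex.I_re, Complex.I_im,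
        Complex.ofReal_re, Complex.ofReal_im, Complex.one_re, Complex.one_im,
        Complex.zero_re, Complex.zero_im, Complex.re_ofNat, Complex.im_ofNat, pow_two]
      field_simp
      ring
  linear_combination (Psi0sol hbar μ ρ κ c Ω x t) * hcoef


end
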